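/- (Conservation law for X̃, general f.) Let f : ℝ → ℝ be continuous and F : ℝ → ℝ differentiable with F′ = f. Let u be a C² solution of Δ_{H¹}u + f(u) = 0 on an open set Ω ⊆ ℝ³. Define on Ω: χ₁ = −½u_x² + ½u_y² + 2(x² + 3y²)u_t² + 2y·u_x·u_t − 2x·u_y·u_t − F(u), χ₂ = −4xy·u_t² − u_x·u_y + 2x·u_x·u_t + 2y·u_y·u_t, χ₃ = −3y·u_x² − y·u_y² + 4y(x²+y²)u_t² + 2x·u_x·u_y − 4(x²+y²)u_x·u_t + 2y·F(u). Then ∂χ₁/∂x + ∂χ₂/∂y + ∂χ₃/∂t = 0 at every point of Ω. -/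

import Mathlib

/-- Partial derivative with respect to the first coordinate (x). -/
noncomputable def pdx (u : ℝ × ℝ × ℝ → ℝ) : ℝ × ℝ × ℝ → ℝ :=
  fun p => fderiv ℝ u p (1, 0, 0)

/-- Partial derivative with respect to the second coordinate (y). -/
noncomputable def pdy (u : ℝ × ℝ × ℝ → ℝ) : ℝ × ℝ × ℝ → ℝ :=
  fun p => fderiv ℝ u p (0, 1, 0)

/-- Partial derivative with respect to the third coordinate (t). -/
noncomputable def pdt (u : ℝ × ℝ × ℝ → ℝ) : ℝ × ℝ × ℝ → ℝ :=
  fun p => fderiv ℝ u p (0, 0, 1)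

/-- The Kohn–Laplace operator on the Heisenberg group H¹:
`Δ u = u_xx + u_yy + 4(x²+y²) u_tt + 4y u_xt − 4x u_yt`. -/
noncomputable def KohnLaplace (u : ℝ × ℝ × ℝ → ℝ) : ℝ × ℝ × ℝ → ℝ :=
  fun p => pdx (pdx u) p + pdy (pdy u) p
    + 4 * (p.1 ^ 2 + p.2.1 ^ 2) * pdt (pdt u) p
    + 4 * p.2.1 * pdt (pdx u) p - 4 * p.1 * pdt (pdy u) p

private lemma sq_hasFDerivAt {E : Type*} [NormedAddCommGroup E] [NormedSpace ℝ E]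
    {g : E → ℝ} {g' : E →L[ℝ] ℝ} {x : E} (hg : HasFDerivAt g g' x) :
    HasFDerivAt (fun y => g y ^ 2) ((2 * g x) • g') x := by
  have h := (hasDerivAt_pow 2 (g x)).comp_hasFDerivAt x hg
  simp at h
  exact h

/-- conservation law for the Noether symmetry X̃, general f:
for a C² solution of Δ_{H¹}u + f(u) = 0 on an open set Ω, Div(χ) = 0 with
χ₁ = −½u_x² + ½u_y² + 2(x²+3y²)u_t² + 2y u_x u_t − 2x u_y u_t − F(u),
χ₂ = −4xy u_t² − u_x u_y + 2x u_x u_t + 2y u_y u_t,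
χ₃ = −3y u_x² − y u_y² + 4y(x²+y²)u_t² + 2x u_x u_y − 4(x²+y²)u_x u_t + 2y F(u). -/
theorem conservation_law_Xtilde
    (f F : ℝ → ℝ) (hf : Continuous f) (hF : ∀ s, HasDerivAt F (f s) s)
    (Ω : Set (ℝ × ℝ × ℝ)) (hΩ : IsOpen Ω)
    (u : ℝ × ℝ × ℝ → ℝ) (hu : ContDiffOn ℝ 2 u Ω)
    (hsol : ∀ p ∈ Ω, KohnLaplace u p + f (u p) = 0) :
    ∀ p ∈ Ω,
      pdx (fun q => -(1 / 2) * (pdx u q) ^ 2 + (1 / 2) * (pdy u q) ^ 2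
          + 2 * (q.1 ^ 2 + 3 * q.2.1 ^ 2) * (pdt u q) ^ 2
          + 2 * q.2.1 * pdx u q * pdt u q - 2 * q.1 * pdy u q * pdt u q - F (u q)) p
      + pdy (fun q => -4 * q.1 * q.2.1 * (pdt u q) ^ 2 - pdx u q * pdy u q
          + 2 * q.1 * pdx u q * pdt u q + 2 * q.2.1 * pdy u q * pdt u q) p
      + pdt (fun q => -3 * q.2.1 * (pdx u q) ^ 2 - q.2.1 * (pdy u q) ^ 2
          + 4 * q.2.1 * (q.1 ^ 2 + q.2.1 ^ 2) * (pdt u q) ^ 2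
          + 2 * q.1 * pdx u q * pdy u q
          - 4 * (q.1 ^ 2 + q.2.1 ^ 2) * pdx u q * pdt u q + 2 * q.2.1 * F (u q)) p = 0 := by
  intro p hp
  have hpn : Ω ∈ nhds p := hΩ.mem_nhds hp
  have hC2 : ContDiffAt ℝ 2 u p := hu.contDiffAt hpn
  have hud : DifferentiableAt ℝ u p := hC2.differentiableAt (by norm_num)
  have hψ : HasFDerivAt (fderiv ℝ u) (fderiv ℝ (fderiv ℝ u) p) p :=
    ((hC2.fderiv_right (n := 2) (m := 1) (by norm_num)).differentiableAt one_ne_zero).hasFDerivAt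
  have ha : HasFDerivAt (fun q => fderiv ℝ u q ((1:ℝ), (0:ℝ), (0:ℝ)))
      ((ContinuousLinearMap.apply ℝ ℝ ((1:ℝ), (0:ℝ), (0:ℝ))).comp
        (fderiv ℝ (fderiv ℝ u) p)) p :=
    (ContinuousLinearMap.apply ℝ ℝ ((1:ℝ), (0:ℝ), (0:ℝ))).hasFDerivAt.comp p hψ
  have hb : HasFDerivAt (fun q => fderiv ℝ u q ((0:ℝ), (1:ℝ), (0:ℝ)))
      ((ContinuousLinearMap.apply ℝ ℝ ((0:ℝ), (1:ℝ), (0:ℝ))).comp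
        (fderiv ℝ (fderiv ℝ u) p)) p :=
    (ContinuousLinearMap.apply ℝ ℝ ((0:ℝ), (1:ℝ), (0:ℝ))).hasFDerivAt.comp p hψ
  have hc : HasFDerivAt (fun q => fderiv ℝ u q ((0:ℝ), (0:ℝ), (1:ℝ)))
      ((ContinuousLinearMap.apply ℝ ℝ ((0:ℝ), (0:ℝ), (1:ℝ))).comp
        (fderiv ℝ (fderiv ℝ u) p)) p :=
    (ContinuousLinearMap.apply ℝ ℝ ((0:ℝ), (0:ℝ), (1:ℝ))).hasFDerivAt.comp p hψ
  have hX : HasFDerivAt (fun q : ℝ × ℝ × ℝ => q.1)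
      (ContinuousLinearMap.fst ℝ ℝ (ℝ × ℝ)) p := hasFDerivAt_fst
  have hY : HasFDerivAt (fun q : ℝ × ℝ × ℝ => q.2.1)
      ((ContinuousLinearMap.fst ℝ ℝ ℝ).comp (ContinuousLinearMap.snd ℝ ℝ (ℝ × ℝ))) p :=
    hasFDerivAt_fst.comp p hasFDerivAt_snd
  have hFu : HasFDerivAt (fun q => F (u q)) (f (u p) • fderiv ℝ u p) p :=
    (hF (u p)).comp_hasFDerivAt p hud.hasFDerivAt
  have H1 := ((((((sq_hasFDerivAt ha).const_mul (-(1/2 : ℝ))).add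
      ((sq_hasFDerivAt hb).const_mul ((1:ℝ)/2))).add
      ((((sq_hasFDerivAt hX).add ((sq_hasFDerivAt hY).const_mul 3)).const_mul 2).mul
        (sq_hasFDerivAt hc))).add
      (((hY.const_mul 2).mul ha).mul hc)).sub
      (((hX.const_mul 2).mul hb).mul hc)).sub hFu
  have H2 := (((((hX.const_mul (-4)).mul hY).mul (sq_hasFDerivAt hc)).sub
      (ha.mul hb)).add
      (((hX.const_mul 2).mul ha).mul hc)).add
      (((hY.const_mul 2).mul hb).mul hc)
  have H3 := ((((((hY.const_mul (-3)).mul (sq_hasFDerivAt ha)).sub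
      (hY.mul (sq_hasFDerivAt hb))).add
      (((hY.const_mul 4).mul ((sq_hasFDerivAt hX).add (sq_hasFDerivAt hY))).mul
        (sq_hasFDerivAt hc))).add
      (((hX.const_mul 2).mul ha).mul hb)).sub
      (((((sq_hasFDerivAt hX).add (sq_hasFDerivAt hY)).const_mul 4).mul ha).mul hc)).add
      ((hY.const_mul 2).mul hFu)
  have hsym : ∀ v w, fderiv ℝ (fderiv ℝ u) p v w = fderiv ℝ (fderiv ℝ u) p w v :=
    hC2.isSymmSndFDerivAt (by norm_num)
  have h := hsol p hp
  unfold KohnLaplace pdx pdy pdt at h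
  rw [ha.fderiv, hb.fderiv, hc.fderiv] at h
  simp only [ContinuousLinearMap.comp_apply, ContinuousLinearMap.apply_apply] at h
  simp only [pdx, pdy, pdt]
  erw [H1.fderiv, H2.fderiv, H3.fderiv]
  simp only [ContinuousLinearMap.add_apply, ContinuousLinearMap.sub_apply,
    ContinuousLinearMap.smul_apply, smul_eq_mul, ContinuousLinearMap.comp_apply,
    ContinuousLinearMap.apply_apply, ContinuousLinearMap.coe_fst', ContinuousLinearMap.coe_snd',
    Pi.add_apply, Pi.sub_apply, Pi.mul_apply]
  simp only [hsym ((0:ℝ), (1:ℝ), (0:ℝ)) ((1:ℝ), (0:ℝ), (0:ℝ)),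
    hsym ((0:ℝ), (0:ℝ), (1:ℝ)) ((1:ℝ), (0:ℝ), (0:ℝ)),
    hsym ((0:ℝ), (0:ℝ), (1:ℝ)) ((0:ℝ), (1:ℝ), (0:ℝ))] at h ⊢
  linear_combination (-(fderiv ℝ u p ((1:ℝ), (0:ℝ), (0:ℝ)))
    + 2 * p.2.1 * fderiv ℝ u p ((0:ℝ), (0:ℝ), (1:ℝ))) * h
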